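/- For every t ≥ 2 and every real ε > 0, there exist n ≥ 1 and a voter matrix V : Fin n → Fin t → Bool in which every column has majority Y, such that the all-Y proposal has a positive number of matches and every proposal p supported by a majority of voters satisfies (number of matches of p) ≤ (2·√6 − 4 + (2/t)·(1 − √(2/3)) + ε)·(number of matches of the all-Y proposal). In particular, the infimum r_t over voter matrices of the best relative representativeness of a majority-supported proposal satisfies limsup_{t→∞} r_t ≤ 2√6 − 4. -/

import Mathlib

open Finset

/-- Number of topics on which opinion vector `v` agrees with proposal `p`. -/
def agreeCount {t : ℕ} (v p : Fin t → Bool) : ℕ :=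
  (univ.filter (fun j => v j = p j)).card

/-- Voter `v` supports proposal `p`: agreement on at least half the topics,
    i.e. `2 * |{j : v j = p j}| ≥ t`. -/
def Supports {t : ℕ} (v p : Fin t → Bool) : Prop :=
  t ≤ 2 * agreeCount v p

instance {t : ℕ} (v p : Fin t → Bool) : Decidable (Supports v p) :=
  Nat.decLe _ _

/-- Proposal `p` is supported by a majority of the voters of `V`:
    `2 * |{i : voter i supports p}| ≥ n`. -/
def MajSupported {n t : ℕ} (V : Fin n → Fin t → Bool) (p : Fin t → Bool) : Prop :=
  n ≤ 2 * (univ.filter (fun i => Supports (V i) p)).card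

/-- Column `j` of `V` has majority Y: `2 * |{i : V i j = true}| ≥ n`. -/
def ColMajority {n t : ℕ} (V : Fin n → Fin t → Bool) (j : Fin t) : Prop :=
  n ≤ 2 * (univ.filter (fun i => V i j = true)).card

/-- Number of true entries of a vector. -/
def trueCount {t : ℕ} (p : Fin t → Bool) : ℕ :=
  (univ.filter (fun j => p j = true)).card

/-- Number of matching opinions between the voters of `V` and proposal `p`. -/
def matchCount {n t : ℕ} (V : Fin n → Fin t → Bool) (p : Fin t → Bool) : ℕ :=
  (univ.filter (fun ij : Fin n × Fin t => V ij.1 ij.2 = p ij.2)).card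

/-! ### Auxiliary construction: `a` all-Y voters plus `t` groups of `w` voters,
group `k` voting Y exactly on the cyclic window of length `ℓ` starting at `k`. -/

/-- Row of a block voter in group `k`: true on the cyclic window of length `ℓ` at `k`. -/
def Brow (t ℓ : ℕ) (k : Fin t) : Fin t → Bool :=
  fun j => decide (((j - k : Fin t) : ℕ) < ℓ)

/-- The voter matrix of the construction. -/
def Vmat (t ℓ a w : ℕ) : Fin (a + t * w) → Fin t → Bool :=
  fun i => Sum.elim (fun _ => fun _ => true)
    (fun b => Brow t ℓ (finProdFinEquiv.symm b).1)
    ((finSumFinEquiv.symm : Fin (a + t * w) ≃ Fin a ⊕ Fin (t * w)) i)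

lemma card_val_lt (t ℓ : ℕ) [NeZero t] (h : ℓ ≤ t) :
    ((univ : Finset (Fin t)).filter (fun j : Fin t => (j : ℕ) < ℓ)).card = ℓ := by
  have ht : 0 < t := Nat.pos_of_ne_zero (NeZero.ne t)
  rw [← Finset.card_range ℓ]
  apply Finset.card_nbij' (fun j : Fin t => (j : ℕ))
    (fun m : ℕ => (⟨m % t, Nat.mod_lt _ ht⟩ : Fin t))
  · intro x hx
    simp only [mem_coe, mem_filter, mem_univ, true_and] at hx
    simpa using hx
  · intro m hm
    simp only [mem_coe, Finset.mem_range] at hm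
    simp only [mem_coe, mem_filter, mem_univ, true_and]
    simpa [Nat.mod_eq_of_lt (lt_of_lt_of_le hm h)] using hm
  · intro x hx
    simp [Nat.mod_eq_of_lt x.isLt]
  · intro m hm
    simp only [mem_coe, Finset.mem_range] at hm
    simp [Nat.mod_eq_of_lt (lt_of_lt_of_le hm h)]

lemma count_window_row (t ℓ : ℕ) [NeZero t] (h : ℓ ≤ t) (k : Fin t) :
    ((univ : Finset (Fin t)).filter (fun j => ((j - k : Fin t) : ℕ) < ℓ)).card = ℓ := by
  have h0 : ((univ : Finset (Fin t)).filter (fun j => ((j - k : Fin t) : ℕ) < ℓ)).card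
      = ((univ : Finset (Fin t)).filter (fun j : Fin t => (j : ℕ) < ℓ)).card := by
    apply Finset.card_equiv (Equiv.subRight k)
    intro j
    simp [Equiv.subRight]
  rw [h0, card_val_lt t ℓ h]

lemma count_window_col (t ℓ : ℕ) [NeZero t] (h : ℓ ≤ t) (j : Fin t) :
    ((univ : Finset (Fin t)).filter (fun k => ((j - k : Fin t) : ℕ) < ℓ)).card = ℓ := by
  have h0 : ((univ : Finset (Fin t)).filter (fun k => ((j - k : Fin t) : ℕ) < ℓ)).card
      = ((univ : Finset (Fin t)).filter (fun k : Fin t => (k : ℕ) < ℓ)).card := by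
    apply Finset.card_equiv (Equiv.subLeft j)
    intro k
    simp [Equiv.subLeft]
  rw [h0, card_val_lt t ℓ h]

/-- Generic count of voters of the construction whose row satisfies `P`. -/
lemma count_voters (t ℓ a w : ℕ) (P : (Fin t → Bool) → Prop) [DecidablePred P] :
    ((univ : Finset (Fin (a + t * w))).filter (fun i => P (Vmat t ℓ a w i))).card
      = (if P (fun _ => true) then a else 0)
        + w * ((univ : Finset (Fin t)).filter (fun k => P (Brow t ℓ k))).card := by
  rw [Finset.card_filter]
  have h1 : (∑ i : Fin (a + t * w), if P (Vmat t ℓ a w i) then 1 else 0)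
      = ∑ x : Fin a ⊕ Fin (t * w), if P (Sum.elim (fun _ => fun _ => true)
          (fun b => Brow t ℓ (finProdFinEquiv.symm b).1) x) then 1 else 0 :=
    Fintype.sum_equiv (finSumFinEquiv.symm : Fin (a + t * w) ≃ Fin a ⊕ Fin (t * w))
      _ _ (fun i => rfl)
  rw [h1, Fintype.sum_sum_type]
  congr 1
  · simp only [Sum.elim_inl]
    by_cases hP : P (fun _ => true) <;> simp [hP]
  · simp only [Sum.elim_inr]
    have h2 : (∑ b : Fin (t * w), if P (Brow t ℓ (finProdFinEquiv.symm b).1) then 1 else 0)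
        = ∑ q : Fin t × Fin w, if P (Brow t ℓ q.1) then 1 else 0 := by
      refine (Fintype.sum_equiv (finProdFinEquiv : Fin t × Fin w ≃ Fin (t * w))
        _ _ (fun q => ?_)).symm
      simp
    refine Eq.trans h2 ?_
    rw [Fintype.sum_prod_type, Finset.card_filter, Finset.mul_sum]
    apply Finset.sum_congr rfl
    intro k _
    by_cases hP : P (Brow t ℓ k) <;> simp [hP]

lemma col_count (t ℓ a w : ℕ) [NeZero t] (h : ℓ ≤ t) (j : Fin t) :
    ((univ : Finset (Fin (a + t * w))).filter (fun i => Vmat t ℓ a w i j = true)).card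
      = a + ℓ * w := by
  rw [count_voters t ℓ a w (fun v => v j = true)]
  have h1 : ((univ : Finset (Fin t)).filter (fun k => Brow t ℓ k j = true)).card = ℓ := by
    simp only [Brow, decide_eq_true_eq]
    exact count_window_col t ℓ h j
  rw [h1]
  simp [mul_comm]

lemma match_count_eq (t ℓ a w : ℕ) [NeZero t] (h : ℓ ≤ t) (p : Fin t → Bool) :
    matchCount (Vmat t ℓ a w) p
      = trueCount p * (a + ℓ * w) + (t - trueCount p) * (t * w - ℓ * w) := by
  unfold matchCount
  rw [Finset.card_filter, Fintype.sum_prod_type, Finset.sum_comm]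
  have hcol : ∀ j : Fin t, (∑ i : Fin (a + t * w), if Vmat t ℓ a w i j = p j then 1 else 0)
      = if p j = true then a + ℓ * w else t * w - ℓ * w := by
    intro j
    rw [← Finset.card_filter]
    have hT := col_count t ℓ a w h j
    have hsum := Finset.card_filter_add_card_filter_not
      (s := (univ : Finset (Fin (a + t * w)))) (p := fun i => Vmat t ℓ a w i j = true)
    simp only [card_univ, Fintype.card_fin] at hsum
    cases hpj : p j with
    | true => simpa using hT
    | false =>
      have hF : ((univ : Finset (Fin (a + t * w))).filter
            (fun i => Vmat t ℓ a w i j = false))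
          = ((univ : Finset (Fin (a + t * w))).filter
            (fun i => ¬ (Vmat t ℓ a w i j = true))) := by
        apply Finset.filter_congr
        intro i _
        simp
      simp only [Bool.false_eq_true, if_false]
      rw [hF]
      omega
  rw [Finset.sum_congr rfl (fun j _ => hcol j), Finset.sum_ite]
  simp only [Finset.sum_const, smul_eq_mul]
  have hneg : ((univ : Finset (Fin t)).filter (fun j => ¬ p j = true)).card
      = t - trueCount p := by
    have := Finset.card_filter_add_card_filter_not
      (s := (univ : Finset (Fin t))) (p := fun j => p j = true)
    simp only [card_univ, Fintype.card_fin] at this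
    unfold trueCount
    omega
  rw [hneg]
  rfl

lemma brow_true_count (t ℓ : ℕ) [NeZero t] (h : ℓ ≤ t) (k : Fin t) :
    trueCount (Brow t ℓ k) = ℓ := by
  unfold trueCount
  simp only [Brow, decide_eq_true_eq]
  exact count_window_row t ℓ h k

lemma agree_le_bound {t : ℕ} (v p : Fin t → Bool) :
    agreeCount v p ≤ ((univ : Finset (Fin t)).filter (fun j => p j = false)).card
      + trueCount v := by
  unfold agreeCount trueCount
  refine le_trans (Finset.card_le_card ?_) (Finset.card_union_le _ _)
  intro j hj
  simp only [mem_filter, mem_univ, true_and, Finset.mem_union] at hj ⊢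
  cases hpj : p j with
  | false => exact Or.inl rfl
  | true => rw [hpj] at hj; exact Or.inr hj


set_option maxHeartbeats 2000000 in
lemma real_core (T L W Zr s eps : ℝ) (hs6 : s ^ 2 = 6)
    (hs_lb : (2449 : ℝ) / 1000 ≤ s) (hs_ub : s ≤ (49 : ℝ) / 20)
    (hT4 : 4 ≤ T) (hL1 : 1 ≤ L) (hW1 : 1 ≤ W)
    (hLb : (s - 2) / 2 * T ≤ L) (hLub : L ≤ (s - 2) / 2 * T + 1)
    (heps : 0 < eps) (hWe : 1 / eps + 1 ≤ W)
    (hZ0 : 0 ≤ Zr) (hZb : 2 * Zr ≤ T + 2 * L) :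
    Zr * (T * W - 1 + L * W) + (T - Zr) * (T * W - L * W)
      ≤ (2 * s - 4 + 2 / T * (1 - s / 3) + eps) * (T * (T * W - 1 + L * W)) := by
  have hT0 : (0 : ℝ) < T := by linarith
  have hεW : 1 + eps ≤ eps * W := by
    have h1 : eps * (1 / eps + 1) ≤ eps * W := mul_le_mul_of_nonneg_left hWe heps.le
    have h2 : eps * (1 / eps + 1) = 1 + eps := by field_simp
    linarith
  have hδ0 : 0 ≤ L - (s - 2) / 2 * T := by linarith
  have hδ1 : L - (s - 2) / 2 * T ≤ 1 := by linarith
  have hident : T ^ 2 + 2 * L ^ 2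
      = (2 * s - 4) * T * (T + L) + 2 * (L - (s - 2) / 2 * T) ^ 2 := by
    linear_combination (-(T ^ 2) / 2) * hs6
  have hsplit : (1 - s / 3) * (T + L)
      = (s / 2 - 1) * T + (1 - s / 3) * (L - (s - 2) / 2 * T) := by
    linear_combination (-T / 6) * hs6
  have hkey : (L - (s - 2) / 2 * T) ^ 2 ≤ (1 - s / 3) * (T + L) := by
    rw [hsplit]
    have hA : (L - (s - 2) / 2 * T) ^ 2 ≤ L - (s - 2) / 2 * T := by
      nlinarith [mul_nonneg hδ0 (sub_nonneg.mpr hδ1)]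
    have hB : (11 / 60 : ℝ) * (L - (s - 2) / 2 * T)
        ≤ (1 - s / 3) * (L - (s - 2) / 2 * T) := by
      apply mul_le_mul_of_nonneg_right _ hδ0
      linarith
    have hC : (0 : ℝ) ≤ (s / 2 - 1) * (T - 4) := by
      apply mul_nonneg _ (by linarith)
      linarith
    nlinarith [hA, hB, hC, hδ0, hδ1, hs_lb]
  have hstep1 : Zr * (T * W - 1 + L * W) + (T - Zr) * (T * W - L * W)
      ≤ (T ^ 2 + 2 * L ^ 2) * W - (T + 2 * L) / 2 := by
    have hLW : (1 : ℝ) * 1 ≤ L * W := mul_le_mul hL1 hW1 (by norm_num) (by linarith)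
    have hcoef : (0 : ℝ) ≤ 2 * L * W - 1 := by nlinarith [hLW]
    have hslack : 0 ≤ ((T + 2 * L) / 2 - Zr) * (2 * L * W - 1) := by
      apply mul_nonneg _ hcoef
      linarith
    nlinarith [hslack]
  have hfinal : (T ^ 2 + 2 * L ^ 2) * W - (T + 2 * L) / 2
      ≤ (2 * s - 4 + 2 / T * (1 - s / 3) + eps) * (T * (T * W - 1 + L * W)) := by
    have hTne : T ≠ 0 := by linarith
    have hdiv : 2 / T * T = 2 := by field_simp
    have hC : (2 * s - 4 + 2 / T * (1 - s / 3) + eps) * (T * (T * W - 1 + L * W))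
        = (2 * s - 4) * T * (T + L) * W + 2 * (1 - s / 3) * (T + L) * W
          + eps * T * (T + L) * W
          - (2 * s - 4) * T - 2 * (1 - s / 3) - eps * T := by
      linear_combination ((1 - s / 3) * (T * W - 1 + L * W)) * hdiv
    rw [hC, hident]
    have hb1 : 2 * (L - (s - 2) / 2 * T) ^ 2 * W
        ≤ 2 * (1 - s / 3) * (T + L) * W := by
      have h5 := mul_le_mul_of_nonneg_right hkey (show (0:ℝ) ≤ W by linarith)
      nlinarith [h5]
    have hb2 : (2 * s - 4) * T + 2 * (1 - s / 3) + eps * T - (T + 2 * L) / 2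
        ≤ eps * T * (T + L) * W := by
      have hTL : T * T ≤ T * (T + L) := by nlinarith
      have h3 : (1 + eps) * (T * T) ≤ (1 + eps) * (T * (T + L)) :=
        mul_le_mul_of_nonneg_left hTL (by linarith)
      have h4 : (1 + eps) * (T * (T + L)) ≤ eps * W * (T * (T + L)) := by
        apply mul_le_mul_of_nonneg_right hεW (by nlinarith)
      nlinarith [h3, h4, hs_ub, hT4, hL1, heps.le, mul_pos heps hT0]
    nlinarith [hb1, hb2]
  linarith [hstep1, hfinal]


set_option maxHeartbeats 1000000 in
/-- for every t ≥ 2 and ε > 0 there is a voter matrix with all-Y column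
majorities in which every majority-supported proposal attains at most
(2√6 - 4 + (2/t)(1 - √(2/3)) + ε) times the matches of the all-Y proposal. -/
theorem r_t_upper_bound (t : ℕ) (ht : 2 ≤ t) (ε : ℝ) (hε : 0 < ε) :
    ∃ n : ℕ, 1 ≤ n ∧ ∃ V : Fin n → Fin t → Bool,
      (∀ j, ColMajority V j) ∧
      0 < matchCount V (fun _ => true) ∧
      ∀ p : Fin t → Bool, MajSupported V p →
        (matchCount V p : ℝ) ≤
          (2 * Real.sqrt 6 - 4 + (2 / t) * (1 - Real.sqrt (2 / 3)) + ε) *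
            matchCount V (fun _ => true) := by
  obtain ⟨s, hs_def⟩ : ∃ x : ℝ, x = Real.sqrt 6 := ⟨_, rfl⟩
  have hs0 : (0 : ℝ) ≤ s := hs_def ▸ Real.sqrt_nonneg 6
  have hs6 : s ^ 2 = 6 := by rw [hs_def]; exact Real.sq_sqrt (by norm_num)
  have hs_lb : (2449 : ℝ) / 1000 ≤ s := by nlinarith
  have hs_ub : s ≤ (49 : ℝ) / 20 := by nlinarith
  have hsqrt23 : Real.sqrt (2 / 3) = s / 3 := by
    rw [show (2 / 3 : ℝ) = (s / 3) ^ 2 by rw [div_pow]; rw [hs6]; norm_num,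
      Real.sqrt_sq (by positivity)]
  rw [show Real.sqrt 6 = s from hs_def.symm, hsqrt23]
  by_cases ht4 : 4 ≤ t
  · -- main construction
    haveI : NeZero t := ⟨by omega⟩
    obtain ⟨ℓ, hℓ_def⟩ : ∃ x : ℕ, x = ⌈(s - 2) / 2 * (t : ℝ)⌉₊ := ⟨_, rfl⟩
    obtain ⟨w, hw_def⟩ : ∃ x : ℕ, x = ⌈(1 / ε : ℝ)⌉₊ + 1 := ⟨_, rfl⟩
    obtain ⟨a, ha_def⟩ : ∃ x : ℕ, x = t * w - 1 := ⟨_, rfl⟩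
    have hw1 : 1 ≤ w := by rw [hw_def]; omega
    have htw1 : 1 ≤ t * w := by
      have := Nat.mul_le_mul (show 1 ≤ t by omega) hw1
      omega
    have ha : a + 1 = t * w := by rw [ha_def]; omega
    have hT4 : (4 : ℝ) ≤ (t : ℝ) := by exact_mod_cast ht4
    have hT0 : (0 : ℝ) < (t : ℝ) := by linarith
    have hy_pos : (0 : ℝ) < (s - 2) / 2 * t := by nlinarith
    have hℓ_lb : (s - 2) / 2 * t ≤ (ℓ : ℝ) := by
      rw [hℓ_def]; exact Nat.le_ceil _
    have hℓ_ub : (ℓ : ℝ) ≤ (s - 2) / 2 * t + 1 := by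
      rw [hℓ_def]; exact le_of_lt (Nat.ceil_lt_add_one (le_of_lt hy_pos))
    have hℓ1 : 1 ≤ ℓ := by
      rw [hℓ_def]
      exact Nat.one_le_iff_ne_zero.mpr (Nat.pos_iff_ne_zero.mp (Nat.ceil_pos.mpr hy_pos))
    have hℓt : ℓ ≤ t := by
      have h1 : (ℓ : ℝ) ≤ (t : ℝ) := by nlinarith
      exact_mod_cast h1
    have hℓw1 : 1 ≤ ℓ * w := by
      have := Nat.mul_le_mul hℓ1 hw1
      omega
    have hℓwtw : ℓ * w ≤ t * w := Nat.mul_le_mul_right w hℓt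
    refine ⟨a + t * w, by omega, Vmat t ℓ a w, ?_, ?_, ?_⟩
    · -- column majorities
      intro j
      unfold ColMajority
      rw [col_count t ℓ a w hℓt j]
      omega
    · -- positivity of all-Y matches
      rw [match_count_eq t ℓ a w hℓt]
      have hZt : trueCount (fun _ : Fin t => true) = t := by
        unfold trueCount; simp
      rw [hZt]
      have h1 : 1 ≤ t * (a + ℓ * w) := by
        have := Nat.mul_le_mul (show 1 ≤ t by omega) (show 1 ≤ a + ℓ * w by omega)
        omega
      omega
    · -- the main bound
      intro p hmaj
      obtain ⟨Z, hZ_def⟩ : ∃ x : ℕ, x = trueCount p := ⟨_, rfl⟩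
      have hZt : Z ≤ t := by
        rw [hZ_def]; unfold trueCount
        simpa using Finset.card_filter_le (univ : Finset (Fin t)) _
      -- a supporting block voter exists
      have hexists : ∃ k : Fin t, Supports (Brow t ℓ k) p := by
        by_contra hno
        push_neg at hno
        unfold MajSupported at hmaj
        rw [count_voters t ℓ a w (fun v => Supports v p)] at hmaj
        have hfilter : ((univ : Finset (Fin t)).filter
            (fun k => Supports (Brow t ℓ k) p)).card = 0 := by
          rw [Finset.card_eq_zero]
          apply Finset.filter_eq_empty_iff.mpr
          intro k _
          exact hno k
        rw [hfilter] at hmaj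
        split at hmaj <;> omega
      obtain ⟨k, hk⟩ := hexists
      -- hence 2 Z ≤ t + 2 ℓ
      have hZbound : 2 * Z ≤ t + 2 * ℓ := by
        unfold Supports at hk
        have h1 := agree_le_bound (Brow t ℓ k) p
        rw [brow_true_count t ℓ hℓt k] at h1
        have h2 : ((univ : Finset (Fin t)).filter (fun j => p j = false)).card = t - Z := by
          have h3 := Finset.card_filter_add_card_filter_not
            (s := (univ : Finset (Fin t))) (p := fun j => p j = true)
          simp only [card_univ, Fintype.card_fin] at h3
          have hcongr : ((univ : Finset (Fin t)).filter (fun j => p j = false))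
              = ((univ : Finset (Fin t)).filter (fun j => ¬ p j = true)) := by
            apply Finset.filter_congr
            intro i _
            simp
          rw [hZ_def]
          unfold trueCount
          rw [hcongr]
          omega
        rw [h2] at h1
        omega
      -- compute matchCounts
      rw [match_count_eq t ℓ a w hℓt p, match_count_eq t ℓ a w hℓt (fun _ => true)]
      have hZall : trueCount (fun _ : Fin t => true) = t := by unfold trueCount; simp
      rw [hZall, ← hZ_def]
      -- cast to ℝ
      have hcast : ((Z * (a + ℓ * w) + (t - Z) * (t * w - ℓ * w) : ℕ) : ℝ)
          = (Z : ℝ) * ((t : ℝ) * w - 1 + ℓ * w) + ((t : ℝ) - Z) * ((t : ℝ) * w - ℓ * w) := by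
        have haR : (a : ℝ) = (t : ℝ) * w - 1 := by
          have h9 : ((a + 1 : ℕ) : ℝ) = ((t * w : ℕ) : ℝ) := by rw [ha]
          rw [Nat.cast_add, Nat.cast_one, Nat.cast_mul] at h9
          linarith
        push_cast [Nat.cast_sub hZt, Nat.cast_sub hℓwtw, haR]
        ring
      have hcast2 : ((t * (a + ℓ * w) + (t - t) * (t * w - ℓ * w) : ℕ) : ℝ)
          = (t : ℝ) * ((t : ℝ) * w - 1 + ℓ * w) := by
        have haR : (a : ℝ) = (t : ℝ) * w - 1 := by
          have h9 : ((a + 1 : ℕ) : ℝ) = ((t * w : ℕ) : ℝ) := by rw [ha]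
          rw [Nat.cast_add, Nat.cast_one, Nat.cast_mul] at h9
          linarith
        rw [Nat.sub_self]
        push_cast [haR]
        ring
      rw [hcast, hcast2]
      -- now pure real arithmetic
      have hW1 : (1 : ℝ) ≤ (w : ℝ) := by exact_mod_cast hw1
      have hL1 : (1 : ℝ) ≤ (ℓ : ℝ) := by exact_mod_cast hℓ1
      have hZ0 : (0 : ℝ) ≤ (Z : ℝ) := Nat.cast_nonneg Z
      have hZb : 2 * (Z : ℝ) ≤ (t : ℝ) + 2 * (ℓ : ℝ) := by exact_mod_cast hZbound
      have hWε : 1 / ε + 1 ≤ (w : ℝ) := by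
        have h1 : (1 / ε : ℝ) ≤ (⌈(1 / ε : ℝ)⌉₊ : ℝ) := Nat.le_ceil _
        have h2 : (w : ℝ) = (⌈(1 / ε : ℝ)⌉₊ : ℝ) + 1 := by
          rw [hw_def]; push_cast; ring
        linarith
      exact real_core (t : ℝ) (ℓ : ℝ) (w : ℝ) (Z : ℝ) s ε hs6 hs_lb hs_ub hT4 hL1 hW1
        hℓ_lb hℓ_ub hε hWε hZ0 hZb
  · -- trivial case t = 2 or t = 3 : constant bound is ≥ 1
    have ht3 : t = 2 ∨ t = 3 := by omega
    refine ⟨1, le_refl 1, fun _ _ => true, ?_, ?_, ?_⟩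
    · intro j
      unfold ColMajority
      simp
    · unfold matchCount
      have h1 : ((univ : Finset (Fin 1 × Fin t)).filter
          (fun ij : Fin 1 × Fin t => (true : Bool) = true)) = univ := by
        apply Finset.filter_true_of_mem
        intro x _
        rfl
      rw [h1, card_univ, Fintype.card_prod, Fintype.card_fin, Fintype.card_fin]
      omega
    · intro p _
      have hM : matchCount (fun (_ : Fin 1) (_ : Fin t) => true) (fun _ => true) = t := by
        unfold matchCount
        have h1 : ((univ : Finset (Fin 1 × Fin t)).filter
            (fun ij : Fin 1 × Fin t => (true : Bool) = true)) = univ := by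
          apply Finset.filter_true_of_mem
          intro x _
          rfl
        rw [h1, card_univ, Fintype.card_prod, Fintype.card_fin, Fintype.card_fin]
        omega
      have hp : matchCount (fun (_ : Fin 1) (_ : Fin t) => true) p ≤ t := by
        unfold matchCount
        calc ((univ : Finset (Fin 1 × Fin t)).filter
              (fun ij : Fin 1 × Fin t => (true : Bool) = p ij.2)).card
            ≤ (univ : Finset (Fin 1 × Fin t)).card := Finset.card_filter_le _ _
          _ = t := by
              rw [card_univ, Fintype.card_prod, Fintype.card_fin, Fintype.card_fin]
              omega
      rw [hM]
      have hT2 : (2 : ℝ) ≤ (t : ℝ) := by exact_mod_cast ht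
      have hT3 : (t : ℝ) ≤ 3 := by
        have : t ≤ 3 := by omega
        exact_mod_cast this
      have hC1 : (1 : ℝ) ≤ 2 * s - 4 + 2 / t * (1 - s / 3) + ε := by
        have h23 : (2 : ℝ) / 3 ≤ 2 / (t : ℝ) := by
          apply div_le_div_of_nonneg_left (by norm_num) (by linarith) hT3
        have hpos : (0 : ℝ) ≤ 1 - s / 3 := by linarith
        have h24 : (2 : ℝ) / 3 * (1 - s / 3) ≤ 2 / (t : ℝ) * (1 - s / 3) :=
          mul_le_mul_of_nonneg_right h23 hpos
        nlinarith [hs_lb]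
      have hple : (matchCount (fun (_ : Fin 1) (_ : Fin t) => true) p : ℝ) ≤ (t : ℝ) := by
        exact_mod_cast hp
      have hTpos : (0 : ℝ) ≤ (t : ℝ) := by linarith
      nlinarith [hple, hC1, hTpos]
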